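/- Let b > 0 and let N ≥ 1 be an integer with 2bN(N−1) < 1, and define k_i = i/N + 2b·i·(i−N) for i = 0, 1, …, N. Then k_0 = 0, k_N = 1, and k_{i−1} < k_i for every i = 1, …, N, so 0 = k_0 < k_1 < ⋯ < k_N = 1 is a valid partition of [0,1]. Moreover, for every b ∈ (0, 1/4), the integer N(b) = ⌈−1/2 + (1/2)√(1 + 2/b)⌉ satisfies N(b) ≥ 2 and 2b·N(b)·(N(b)−1) < 1. -/

import Mathlib

open Real

theorem stmt_13 (b : ℝ) (hb : 0 < b) (N : ℕ) (hN : 1 ≤ N)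
    (hadm : 2 * b * N * (N - 1) < 1)
    (k : ℕ → ℝ) (hk : ∀ i, k i = (i : ℝ) / N + 2 * b * i * ((i : ℝ) - N)) :
    (k 0 = 0 ∧ k N = 1 ∧ ∀ i : ℕ, 1 ≤ i → i ≤ N → k (i - 1) < k i) ∧
    (∀ b' : ℝ, 0 < b' → b' < 1 / 4 →
      (2 : ℤ) ≤ ⌈(-1 / 2 : ℝ) + Real.sqrt (1 + 2 / b') / 2⌉ ∧
      2 * b' * ((⌈(-1 / 2 : ℝ) + Real.sqrt (1 + 2 / b') / 2⌉ : ℤ) : ℝ) *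
        (((⌈(-1 / 2 : ℝ) + Real.sqrt (1 + 2 / b') / 2⌉ : ℤ) : ℝ) - 1) < 1) := by
  have hN0 : (0:ℝ) < N := by exact_mod_cast hN
  constructor
  · refine ⟨by rw [hk]; simp, by rw [hk]; field_simp; ring, ?_⟩
    intro i hi1 hiN
    obtain ⟨m, rfl⟩ := Nat.exists_eq_add_of_le hi1
    simp only [Nat.add_sub_cancel_left] at *
    rw [hk, hk]
    have hm : (m:ℝ) + 1 ≤ N := by exact_mod_cast Nat.add_comm 1 m ▸ hiN
    have hm0 : (0:ℝ) ≤ m := Nat.cast_nonneg m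
    rw [div_add' _ _ _ (ne_of_gt hN0), div_add' _ _ _ (ne_of_gt hN0),
      div_lt_div_iff₀ hN0 hN0]
    push_cast
    nlinarith [mul_nonneg (mul_nonneg hb.le hN0.le) hm0, mul_pos hb hN0]
  · intro b' hb' hb4
    have h9 : (9:ℝ) < 1 + 2 / b' := by
      have : (8:ℝ) < 2 / b' := by
        rw [lt_div_iff₀ hb']; nlinarith
      linarith
    have hs3 : (3:ℝ) < Real.sqrt (1 + 2 / b') := by
      rw [show (3:ℝ) = Real.sqrt 9 by
        rw [show (9:ℝ) = 3^2 by norm_num, Real.sqrt_sq (by norm_num)]]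
      exact Real.sqrt_lt_sqrt (by norm_num) h9
    have hsq : Real.sqrt (1 + 2 / b') ^ 2 = 1 + 2 / b' :=
      Real.sq_sqrt (by linarith)
    set s := Real.sqrt (1 + 2 / b') with hsdef
    set n : ℤ := ⌈(-1 / 2 : ℝ) + s / 2⌉ with hndef
    have h2 : (2:ℤ) ≤ n := by
      rw [show (2:ℤ) = 1 + 1 by norm_num, Int.add_one_le_iff, Int.lt_ceil]
      push_cast; linarith
    refine ⟨h2, ?_⟩
    have hlt : (n:ℝ) < (-1 / 2 : ℝ) + s / 2 + 1 := Int.ceil_lt_add_one _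
    have h2n : 2 * (n:ℝ) - 1 < s := by linarith
    have h2n0 : (0:ℝ) < 2 * (n:ℝ) - 1 := by
      have : (2:ℝ) ≤ n := by exact_mod_cast h2
      linarith
    have hsq2 : (2 * (n:ℝ) - 1)^2 < 1 + 2 / b' := by
      nlinarith
    have hbinv : b' * (2 / b') = 2 := by field_simp
    nlinarith [hsq2, hb']
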